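/- For every integer k ≥ 3, the binary form p_{2k−1}(x,y) = C(2k−1,k) x^{k−1} y^{k−1} (x − y) of degree 2k−1 satisfies L_ℝ(p_{2k−1}) = 2k − 1. -/

import Mathlib

open Polynomial

namespace RealRankAux

lemma nform (s : Multiset ℝ) (h0 : (0:ℝ) ∉ s) :
    (derivative (derivative ((s.map (fun a => X - C a)).prod))).eval 0 *
        ((s.map (fun a => X - C a)).prod).eval 0 -
      ((derivative ((s.map (fun a => X - C a)).prod)).eval 0) ^ 2 =
      -(s.map (fun a => (a⁻¹) ^ 2)).sum * (((s.map (fun a => X - C a)).prod).eval 0) ^ 2 := by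
  induction s using Multiset.induction_on with
  | empty => simp
  | cons a t ih =>
      have ha : a ≠ 0 := by rintro rfl; exact h0 (Multiset.mem_cons_self _ _)
      have h0t : (0:ℝ) ∉ t := fun h => h0 (Multiset.mem_cons_of_mem h)
      have ih' := ih h0t
      set Q := (t.map (fun a => X - C a)).prod with hQ
      have hM : ((a ::ₘ t).map (fun a => X - C a)).prod = (X - C a) * Q := by
        rw [Multiset.map_cons, Multiset.prod_cons]
      have hd1 : derivative ((X - C a) * Q) = Q + (X - C a) * derivative Q := by
        rw [derivative_mul]; simp
      have hd2 : derivative (Q + (X - C a) * derivative Q)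
          = 2 * derivative Q + (X - C a) * derivative (derivative Q) := by
        rw [derivative_add, derivative_mul]; simp; ring
      rw [hM, hd1, hd2]
      rw [Multiset.map_cons, Multiset.sum_cons]
      simp only [eval_add, eval_mul, eval_sub, eval_X, eval_C, eval_ofNat, zero_sub]
      set q0 := Q.eval 0
      set q1 := (derivative Q).eval 0
      set q2 := (derivative (derivative Q)).eval 0
      set S := (t.map (fun a => (a⁻¹) ^ 2)).sum
      have haa : a⁻¹ * a = 1 := inv_mul_cancel₀ ha
      linear_combination a^2 * ih' + q0^2 * (a⁻¹*a + 1) * haa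

end RealRankAux

namespace RealRankAux2
open RealRankAux

/-- real-rooted with at most simple root at 0 -/
def RR (p : Polynomial ℝ) : Prop :=
  p ≠ 0 ∧ Multiset.card p.roots = p.natDegree ∧ p.rootMultiplicity 0 ≤ 1

lemma two_le_mult {p : Polynomial ℝ} (hp : p ≠ 0) (h : X ^ 2 ∣ p) :
    2 ≤ p.rootMultiplicity 0 := by
  rw [le_rootMultiplicity_iff hp]
  simpa using h

lemma deriv_ne_zero {p : Polynomial ℝ} (hp : 1 ≤ p.natDegree) : derivative p ≠ 0 := by
  intro h
  have h2 := coeff_derivative p (p.natDegree - 1)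
  rw [h] at h2
  have h3 : p.natDegree - 1 + 1 = p.natDegree := by omega
  rw [h3] at h2
  have h4 : p.coeff p.natDegree ≠ 0 := by
    intro hc
    have : p = 0 := leadingCoeff_eq_zero.mp hc
    simp [this] at hp
  have h5 : ((p.natDegree - 1 : ℕ) : ℝ) + 1 ≠ 0 := by positivity
  simp only [coeff_zero] at h2
  exact (mul_ne_zero h4 h5) h2.symm

lemma RR_derivative {p : Polynomial ℝ} (hp : RR p) (h1 : 1 ≤ p.natDegree) :
    RR (derivative p) := by
  obtain ⟨hne, hcard, hmult⟩ := hp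
  have hd_ne : derivative p ≠ 0 := deriv_ne_zero h1
  have hdle : (derivative p).natDegree ≤ p.natDegree - 1 := natDegree_derivative_le p
  have hcard' : Multiset.card (derivative p).roots = (derivative p).natDegree := by
    have h5 := p.card_roots_le_derivative
    have h6 := (derivative p).card_roots'
    omega
  refine ⟨hd_ne, hcard', ?_⟩
  by_cases h0 : p.IsRoot 0
  · rw [derivative_rootMultiplicity_of_root h0]; omega
  · by_contra hcon
    push_neg at hcon
    have hdvd : X ^ 2 ∣ derivative p := by
      have := pow_rootMultiplicity_dvd (derivative p) 0
      simp only [map_zero, sub_zero] at this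
      exact dvd_trans (pow_dvd_pow X hcon) this
    obtain ⟨g, hg⟩ := hdvd
    have he1 : (derivative p).eval 0 = 0 := by rw [hg]; simp
    have he2 : (derivative (derivative p)).eval 0 = 0 := by
      rw [hg, derivative_mul]; simp
    -- factorization
    have hfac := C_leadingCoeff_mul_prod_multiset_X_sub_C hcard
    have h0r : (0 : ℝ) ∉ p.roots := fun h => h0 (isRoot_of_mem_roots h)
    have hnf := nform p.roots h0r
    set P := (p.roots.map (fun a => X - C a)).prod with hP
    have hc : p.leadingCoeff ≠ 0 := leadingCoeff_ne_zero.mpr hne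
    have hP1 : (derivative P).eval 0 = 0 := by
      have : derivative p = C p.leadingCoeff * derivative P := by
        conv_lhs => rw [← hfac]
        rw [derivative_C_mul]
      rw [this] at he1
      simpa [hc] using he1
    have hP2 : (derivative (derivative P)).eval 0 = 0 := by
      have : derivative (derivative p) = C p.leadingCoeff * derivative (derivative P) := by
        conv_lhs => rw [← hfac]
        rw [derivative_C_mul, derivative_C_mul]
      rw [this] at he2
      simpa [hc] using he2
    have hP0 : P.eval 0 ≠ 0 := by
      intro hz
      apply h0
      have : p.eval 0 = p.leadingCoeff * P.eval 0 := by
        conv_lhs => rw [← hfac]; simp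
      simpa [IsRoot, this, hz] using (mul_eq_zero_of_right p.leadingCoeff hz)
    rw [hP1, hP2] at hnf
    simp only [zero_mul, ne_eq] at hnf
    -- 0 - 0 = -S * P0^2
    have hSpos : 0 < (p.roots.map (fun a => (a⁻¹) ^ 2)).sum := by
      have hcard1 : 0 < Multiset.card p.roots := by omega
      obtain ⟨a, ha⟩ := Multiset.card_pos_iff_exists_mem.mp hcard1
      obtain ⟨t, hteq⟩ := Multiset.exists_cons_of_mem ha
      rw [hteq, Multiset.map_cons, Multiset.sum_cons]
      have ha0 : a ≠ 0 := fun h => h0r (h ▸ ha)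
      have : (0:ℝ) < a⁻¹ ^ 2 := by positivity
      have ht : (0:ℝ) ≤ (t.map (fun a => (a⁻¹) ^ 2)).sum := by
        apply Multiset.sum_nonneg
        intro x hx
        obtain ⟨b, _, rfl⟩ := Multiset.mem_map.mp hx
        positivity
      linarith
    have hPsq : 0 < P.eval 0 ^ 2 := by positivity
    nlinarith [hSpos, hPsq]

end RealRankAux2

namespace RealRankAux3
open RealRankAux2

lemma natDegree_deriv_RR {p : Polynomial ℝ} (hp : RR p) (h1 : 1 ≤ p.natDegree) :
    (derivative p).natDegree = p.natDegree - 1 := by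
  obtain ⟨hne, hcard, _⟩ := hp
  have h5 := p.card_roots_le_derivative
  have h6 := (derivative p).card_roots'
  have h7 := natDegree_derivative_le p
  omega

lemma RR_iterate {p : Polynomial ℝ} (hp : RR p) (e : ℕ) (he : e ≤ p.natDegree) :
    RR (derivative^[e] p) ∧ (derivative^[e] p).natDegree = p.natDegree - e := by
  induction e with
  | zero => simpa using hp
  | succ n ih =>
      obtain ⟨h1, h2⟩ := ih (by omega)
      rw [Function.iterate_succ_apply']
      have hd : 1 ≤ (derivative^[n] p).natDegree := by omega
      exact ⟨RR_derivative h1 hd, by rw [natDegree_deriv_RR h1 hd]; omega⟩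

lemma X_pow_dvd_derivative {p : Polynomial ℝ} {c : ℕ} (h : X ^ (c + 1) ∣ p) :
    X ^ c ∣ derivative p := by
  obtain ⟨g, rfl⟩ := h
  rw [derivative_mul, derivative_X_pow]
  have h1 : X ^ c ∣ C (((c:ℕ) + 1 : ℕ) : ℝ) * X ^ (c + 1 - 1) * g := by
    have hcc : c + 1 - 1 = c := by omega
    rw [hcc, mul_comm (C (((c:ℕ) + 1 : ℕ) : ℝ)) (X ^ c), mul_assoc]
    exact Dvd.dvd.mul_right dvd_rfl _
  have h2 : X ^ c ∣ X ^ (c + 1) * derivative g :=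
    Dvd.dvd.mul_right (pow_dvd_pow X (by omega)) _
  exact dvd_add h1 h2

lemma X_pow_dvd_iterate_derivative {p : Polynomial ℝ} {c e : ℕ} (he : e ≤ c)
    (h : X ^ c ∣ p) : X ^ (c - e) ∣ derivative^[e] p := by
  induction e with
  | zero => simpa using h
  | succ n ih =>
      rw [Function.iterate_succ_apply']
      have h1 : c - n = (c - (n+1)) + 1 := by omega
      have := ih (by omega)
      rw [h1] at this
      exact X_pow_dvd_derivative this

end RealRankAux3

namespace RealRankKey
open RealRankAux2 RealRankAux3

lemma key (k M : ℕ) (hk : 1 ≤ k) (hM : k + 1 ≤ M) (T : Finset ℝ) (w : ℝ → ℝ)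
    (hq : T.card + 1 ≤ M)
    (hmom : ∀ m ≤ M, ∑ t ∈ T, w t * t ^ m =
      (if m = k then 1 else if m = k - 1 then -1 else 0)) : False := by
  classical
  set q := T.card with hqdef
  set W : Polynomial ℝ := ∏ t ∈ T, (X - C t) with hWdef
  have hWmonic : W.Monic := monic_prod_of_monic _ _ (fun t _ => monic_X_sub_C t)
  have hWne : W ≠ 0 := hWmonic.ne_zero
  have hWdeg : W.natDegree = q := by
    rw [hWdef, natDegree_prod _ _ (fun t _ => X_sub_C_ne_zero t)]
    simp [natDegree_X_sub_C, hqdef]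
  -- the functional
  have hPhi : ∀ P : Polynomial ℝ, P.natDegree ≤ M →
      ∑ t ∈ T, w t * P.eval t = P.coeff k - P.coeff (k - 1) := by
    intro P hd
    have hev : ∀ t : ℝ, P.eval t = ∑ m ∈ Finset.range (M + 1), P.coeff m * t ^ m :=
      fun t => eval_eq_sum_range' (by omega) t
    calc ∑ t ∈ T, w t * P.eval t
        = ∑ t ∈ T, ∑ m ∈ Finset.range (M + 1), P.coeff m * (w t * t ^ m) := by
          refine Finset.sum_congr rfl (fun t _ => ?_)
          rw [hev t, Finset.mul_sum]
          exact Finset.sum_congr rfl (fun m _ => by ring)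
      _ = ∑ m ∈ Finset.range (M + 1), P.coeff m * ∑ t ∈ T, w t * t ^ m := by
          rw [Finset.sum_comm]
          exact Finset.sum_congr rfl (fun m _ => by rw [Finset.mul_sum])
      _ = ∑ m ∈ Finset.range (M + 1), P.coeff m *
            (if m = k then 1 else if m = k - 1 then -1 else 0) := by
          refine Finset.sum_congr rfl (fun m hm => ?_)
          rw [hmom m (by simpa using Nat.lt_succ_iff.mp (Finset.mem_range.mp hm))]
      _ = ∑ m ∈ Finset.range (M + 1),
            ((if m = k then P.coeff k else 0) + (if m = k - 1 then -P.coeff (k-1) else 0)) := by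
          refine Finset.sum_congr rfl (fun m _ => ?_)
          by_cases h1 : m = k
          · subst h1
            have : ¬ (m = m - 1) := by omega
            simp [this]
          · by_cases h2 : m = k - 1
            · subst h2
              simp [h1]
            · simp [h1, h2]
      _ = P.coeff k - P.coeff (k - 1) := by
          rw [Finset.sum_add_distrib, Finset.sum_ite_eq' (Finset.range (M+1)) k,
            Finset.sum_ite_eq' (Finset.range (M+1)) (k-1)]
          simp only [Finset.mem_range]
          rw [if_pos (by omega), if_pos (by omega)]
          ring
  -- coefficient relations
  have hrel : ∀ i, i ≤ M - q → (X ^ i * W).coeff k = (X ^ i * W).coeff (k - 1) := by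
    intro i hi
    have hdeg : (X ^ i * W).natDegree = i + q := by
      rw [natDegree_mul (pow_ne_zero i X_ne_zero) hWne, natDegree_X_pow, hWdeg]
    have heval : ∀ t ∈ T, (X ^ i * W).eval t = 0 := by
      intro t ht
      rw [eval_mul, hWdef, eval_prod]
      have : ((X - C t).eval t) = 0 := by simp
      rw [Finset.prod_eq_zero ht this, mul_zero]
    have h0 : ∑ t ∈ T, w t * (X ^ i * W).eval t = 0 := by
      refine Finset.sum_eq_zero (fun t ht => ?_)
      rw [heval t ht, mul_zero]
    have := hPhi (X ^ i * W) (by omega)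
    rw [h0] at this
    linarith [this]
  -- V and its zero-run
  set V : Polynomial ℝ := (X - C 1) * W with hVdef
  have hVne : V ≠ 0 := mul_ne_zero (X_sub_C_ne_zero 1) hWne
  have hVdeg : V.natDegree = q + 1 := by
    rw [hVdef, natDegree_mul (X_sub_C_ne_zero 1) hWne, natDegree_X_sub_C, hWdeg]; omega
  have hVcoeff : ∀ j, V.coeff j = (if 1 ≤ j then W.coeff (j-1) else 0) - W.coeff j := by
    intro j
    rw [hVdef, sub_mul, coeff_sub]
    congr 1
    · rcases j with _ | j
      · simp [mul_comm]
      · rw [coeff_X_mul]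
        simp
    · simp
  have hXW : ∀ (i m : ℕ), (X ^ i * W).coeff m = if i ≤ m then W.coeff (m - i) else 0 := by
    intro i m
    exact coeff_X_pow_mul' W i m
  have hVzero : ∀ j, k - (M - q) ≤ j → j ≤ k → V.coeff j = 0 := by
    intro j hj1 hj2
    have hiq : k - j ≤ M - q := by omega
    have hE := hrel (k - j) hiq
    rw [hXW, hXW] at hE
    rw [if_pos (by omega)] at hE
    have hkj : k - (k - j) = j := by omega
    rw [hkj] at hE
    by_cases hj0 : 1 ≤ j
    · rw [if_pos (by omega)] at hE
      have : k - 1 - (k - j) = j - 1 := by omega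
      rw [this] at hE
      rw [hVcoeff j, if_pos hj0, ← hE]
      ring
    · have hj00 : j = 0 := by omega
      subst hj00
      rw [if_neg (by omega)] at hE
      rw [hVcoeff 0]
      simp [hE]
  -- low part B and high part H
  set B : Polynomial ℝ := ∑ j ∈ Finset.range (k - (M - q)), C (V.coeff j) * X ^ j with hBdef
  have hBcoeff : ∀ m, B.coeff m = if m < k - (M - q) then V.coeff m else 0 := by
    intro m
    rw [hBdef, finset_sum_coeff]
    by_cases hm : m < k - (M - q)
    · rw [if_pos hm, Finset.sum_eq_single_of_mem m (Finset.mem_range.mpr hm)]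
      · simp
      · intro b _ hbm
        simp [coeff_C_mul, coeff_X_pow, (Ne.symm hbm)]
    · rw [if_neg hm]
      refine Finset.sum_eq_zero (fun b hb => ?_)
      have hbm : m ≠ b := by
        have := Finset.mem_range.mp hb
        omega
      simp [coeff_C_mul, coeff_X_pow, hbm]
  set H : Polynomial ℝ := V - B with hHdef
  have hHcoeff : ∀ j ≤ k, H.coeff j = 0 := by
    intro j hj
    rw [hHdef, coeff_sub, hBcoeff]
    by_cases hjl : j < k - (M - q)
    · rw [if_pos hjl]; ring
    · rw [if_neg hjl, hVzero j (by omega) hj]; ring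
  have hHdvd : X ^ (k + 1) ∣ H := X_pow_dvd_iff.mpr (fun d hd => hHcoeff d (by omega))
  -- RR V
  have hVroots : V.roots = {(1:ℝ)} + T.val := by
    rw [hVdef, roots_mul (mul_ne_zero (X_sub_C_ne_zero 1) hWne), roots_X_sub_C,
      hWdef, roots_prod_X_sub_C]
  have hRRV : RR V := by
    refine ⟨hVne, ?_, ?_⟩
    · rw [hVroots, Multiset.card_add, Multiset.card_singleton, hVdeg]
      have : Multiset.card T.val = T.card := rfl
      omega
    · rw [← count_roots, hVroots, Multiset.count_add]
      have h1 : Multiset.count (0:ℝ) {(1:ℝ)} = 0 := by simp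
      rw [h1]
      have h2 := Multiset.nodup_iff_count_le_one.mp T.nodup 0
      omega
  have hMq : 1 ≤ M - q := by omega
  -- case split on B
  by_cases hB0 : B = 0
  · have hVH : V = H := by rw [hHdef, hB0, sub_zero]
    have hx2 : X ^ 2 ∣ V := by
      rw [hVH]
      exact dvd_trans (pow_dvd_pow X (by omega)) hHdvd
    have h21 := two_le_mult hVne hx2
    have h22 := hRRV.2.2
    omega
  · have hBdeg : B.natDegree + 1 ≤ k - (M - q) := by
      have h1 : B.natDegree ≤ k - (M - q) - 1 := by
        rw [hBdef]
        refine (natDegree_sum_le _ _).trans ?_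
        rw [Finset.fold_max_le]
        constructor
        · omega
        · intro j hj
          refine (natDegree_C_mul_le _ _).trans ?_
          rw [natDegree_X_pow]
          have := Finset.mem_range.mp hj
          omega
      have h2 : k - (M - q) ≠ 0 := by
        intro hz
        rw [hz] at hBdef
        simp only [Finset.range_zero, Finset.sum_empty] at hBdef
        exact hB0 hBdef
      omega
    set e : ℕ := B.natDegree + 1 with hedef
    have heq : e ≤ q := by omega
    have hiter := RR_iterate hRRV e (by omega)
    have hVe : derivative^[e] V = derivative^[e] H := by
      have : V = H + B := by rw [hHdef]; ring
      rw [this]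
      rw [iterate_map_add]
      rw [Polynomial.iterate_derivative_eq_zero (p := B) (by omega), add_zero]
    have hdvd2 : X ^ 2 ∣ derivative^[e] V := by
      rw [hVe]
      have := X_pow_dvd_iterate_derivative (c := k + 1) (e := e) (by omega) hHdvd
      exact dvd_trans (pow_dvd_pow X (by omega)) this
    have := two_le_mult hiter.1.1 hdvd2
    have := hiter.1.2.2
    omega

end RealRankKey

namespace RealRankLower
open RealRankKey

lemma coeff_lin_pow (a b : ℝ) (n m : ℕ) (hm : m ≤ n) :
    ((C a * X + C b) ^ n).coeff m = (n.choose m : ℝ) * a ^ m * b ^ (n - m) := by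
  rw [add_pow, finset_sum_coeff]
  rw [Finset.sum_eq_single_of_mem m (Finset.mem_range.mpr (by omega))]
  · have : (C a * X) ^ m * C b ^ (n - m) * ((n.choose m : ℕ) : ℝ[X])
        = C (a ^ m * b ^ (n - m) * (n.choose m : ℝ)) * X ^ m := by
      push_cast
      rw [mul_pow, ← C_pow, ← C_pow]
      rw [← C_eq_natCast]
      rw [C_mul, C_mul]
      ring
    rw [this, coeff_C_mul, coeff_X_pow, if_pos rfl]
    ring
  · intro i _ him
    have : (C a * X) ^ i * C b ^ (n - i) * ((n.choose i : ℕ) : ℝ[X])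
        = C (a ^ i * b ^ (n - i) * (n.choose i : ℝ)) * X ^ i := by
      push_cast
      rw [mul_pow, ← C_pow, ← C_pow, ← C_eq_natCast, C_mul, C_mul]
      ring
    rw [this, coeff_C_mul, coeff_X_pow, if_neg (Ne.symm him), mul_zero]

lemma lower (k : ℕ) (hk : 3 ≤ k) (r : ℕ) (lam al be : Fin r → ℝ)
    (h : C (((2*k-1).choose k : ℕ) : ℝ) * X ^ (k-1) * (X - C 1) =
      ∑ j, C (lam j) * (C (al j) * X + C (be j)) ^ (2*k-1)) :
    2*k-1 ≤ r := by
  classical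
  by_contra hcon
  push_neg at hcon
  have hr : r ≤ 2*k-2 := by omega
  set d : ℕ := 2*k-1 with hd
  have hcsymm : d.choose (k-1) = d.choose k := by
    have : d - k = k - 1 := by omega
    rw [← this, Nat.choose_symm (by omega)]
  -- coefficient equations
  have hco : ∀ m, m ≤ d → ∑ j, lam j * al j ^ m * be j ^ (d - m) =
      (if m = k then 1 else if m = k - 1 then -1 else 0) := by
    intro m hm
    have h1 := congrArg (fun p => Polynomial.coeff p m) h
    -- LHS coeff
    have hL : (C ((d.choose k : ℕ) : ℝ) * X ^ (k-1) * (X - C 1)).coeff m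
        = (d.choose k : ℝ) * ((if m = k then 1 else 0) - (if m = k - 1 then 1 else 0)) := by
      have hexp : C ((d.choose k : ℕ) : ℝ) * X ^ (k-1) * (X - C 1)
          = C ((d.choose k : ℕ) : ℝ) * X ^ (k-1+1) - C ((d.choose k : ℕ) : ℝ) * X ^ (k-1) := by
        rw [pow_succ, C_1]; ring
      rw [hexp, coeff_sub, coeff_C_mul, coeff_C_mul, coeff_X_pow, coeff_X_pow]
      have hkk : k - 1 + 1 = k := by omega
      rw [hkk]
      ring
    have hR : (∑ j, C (lam j) * (C (al j) * X + C (be j)) ^ d).coeff m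
        = ∑ j, lam j * ((d.choose m : ℝ) * al j ^ m * be j ^ (d - m)) := by
      rw [finset_sum_coeff]
      refine Finset.sum_congr rfl (fun j _ => ?_)
      rw [coeff_C_mul, coeff_lin_pow _ _ _ _ hm]
    rw [hL, hR] at h1
    have hchoose : (0:ℝ) < (d.choose m : ℝ) := by
      have := Nat.choose_pos (show m ≤ d from hm)
      exact_mod_cast this
    have h2 : (d.choose m : ℝ) * (∑ j, lam j * al j ^ m * be j ^ (d - m))
        = (d.choose k : ℝ) * ((if m = k then 1 else 0) - (if m = k - 1 then 1 else 0)) := by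
      calc (d.choose m : ℝ) * (∑ j, lam j * al j ^ m * be j ^ (d - m))
          = ∑ j, lam j * ((d.choose m : ℝ) * al j ^ m * be j ^ (d - m)) := by
            rw [Finset.mul_sum]
            exact Finset.sum_congr rfl (fun j _ => by ring)
        _ = (d.choose k : ℝ) * ((if m = k then 1 else 0) - (if m = k - 1 then 1 else 0)) := h1.symm
    by_cases h3 : m = k
    · simp only [if_pos h3, if_neg (show ¬ m = k - 1 by omega)] at h2 ⊢
      rw [h3] at h2 hchoose ⊢
      exact mul_left_cancel₀ (ne_of_gt hchoose) (by rw [h2]; ring)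
    · by_cases h4 : m = k - 1
      · simp only [if_neg h3, if_pos h4] at h2 ⊢
        have hcc : (d.choose m : ℝ) = (d.choose k : ℝ) := by
          rw [h4]; exact Nat.cast_inj.mpr hcsymm
        rw [← hcc] at h2
        exact mul_left_cancel₀ (ne_of_gt hchoose) (by rw [h2]; ring)
      · simp only [if_neg h3, if_neg h4] at h2 ⊢
        have h5 : (d.choose m : ℝ) * (∑ j, lam j * al j ^ m * be j ^ (d - m)) = 0 := by
          rw [h2]; ring
        rcases mul_eq_zero.mp h5 with h6 | h6
        · exact absurd h6 (ne_of_gt hchoose)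
        · exact h6
  -- merge into finset of nodes
  set J : Finset (Fin r) := Finset.univ.filter (fun j => be j ≠ 0) with hJ
  set T : Finset ℝ := J.image (fun j => al j / be j) with hT
  set w : ℝ → ℝ := fun t => ∑ j ∈ J.filter (fun j => al j / be j = t), lam j * be j ^ d with hw
  set M : ℕ := if (J = Finset.univ) then 2*k-1 else 2*k-2 with hM
  have hMd : M ≤ d := by
    rw [hM]; split <;> omega
  have hmom : ∀ m ≤ M, ∑ t ∈ T, w t * t ^ m =
      (if m = k then 1 else if m = k - 1 then -1 else 0) := by
    intro m hm
    rw [← hco m (by omega)]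
    have hstep1 : ∀ j ∈ J, lam j * al j ^ m * be j ^ (d - m)
        = (lam j * be j ^ d) * (al j / be j) ^ m := by
      intro j hj
      have hbe : be j ≠ 0 := by
        rw [hJ] at hj
        exact (Finset.mem_filter.mp hj).2
      rw [div_pow]
      rw [show d = m + (d - m) by omega, pow_add]
      rw [Nat.add_sub_cancel_left]
      field_simp
    have hsplit : ∑ j, lam j * al j ^ m * be j ^ (d - m)
        = ∑ j ∈ J, (lam j * be j ^ d) * (al j / be j) ^ m := by
      rw [← Finset.sum_filter_add_sum_filter_not Finset.univ (fun j => be j ≠ 0)]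
      have hz : ∑ j ∈ Finset.univ.filter (fun j => ¬ be j ≠ 0), lam j * al j ^ m * be j ^ (d - m) = 0 := by
        refine Finset.sum_eq_zero (fun j hj => ?_)
        have hbe : be j = 0 := by
          have := (Finset.mem_filter.mp hj).2
          by_contra hb
          exact this hb
        have hdm : d - m ≠ 0 := by
          have : m ≤ M := hm
          rw [hM] at this
          by_cases hJu : J = Finset.univ
          · rw [if_pos hJu] at this
            exfalso
            have : j ∈ J := hJu ▸ Finset.mem_univ j
            rw [hJ] at this
            exact (Finset.mem_filter.mp this).2 hbe
          · rw [if_neg hJu] at this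
            omega
        rw [hbe, zero_pow hdm]
        ring
      rw [hz, add_zero]
      exact Finset.sum_congr rfl hstep1
    rw [hsplit]
    have hfib := Finset.sum_fiberwise_of_maps_to (s := J) (t := T)
      (g := fun j => al j / be j)
      (f := fun j => (lam j * be j ^ d) * (al j / be j) ^ m)
      (fun j hj => Finset.mem_image_of_mem _ hj)
    rw [← hfib]
    refine Finset.sum_congr rfl (fun t ht => ?_)
    have hwt : w t = ∑ j ∈ J.filter (fun j => al j / be j = t), lam j * be j ^ d := rfl
    rw [hwt, Finset.sum_mul]
    refine Finset.sum_congr rfl (fun j hj => ?_)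
    have hjt := (Finset.mem_filter.mp hj).2
    rw [hjt]
  -- cardinality
  have hcard : T.card + 1 ≤ M := by
    by_cases hJu : J = Finset.univ
    · have h1 : T.card ≤ r := le_trans (Finset.card_image_le) (by rw [hJu]; simp)
      rw [hM, if_pos hJu]
      omega
    · have hex : ∃ j0, j0 ∉ J := by
        by_contra hne
        push_neg at hne
        exact hJu (Finset.eq_univ_iff_forall.mpr hne)
      obtain ⟨j0, hj0⟩ := hex
      have hsub : J ⊆ Finset.univ.erase j0 :=
        fun x hx => Finset.mem_erase.mpr ⟨fun he => hj0 (he ▸ hx), Finset.mem_univ x⟩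
      have h1 : J.card ≤ r - 1 := by
        have := Finset.card_le_card hsub
        rw [Finset.card_erase_of_mem (Finset.mem_univ j0)] at this
        simpa using this
      have h2 : T.card ≤ J.card := Finset.card_image_le
      have hr1 : 1 ≤ r := by
        rcases Nat.eq_zero_or_pos r with h0 | h0
        · exact absurd j0.isLt (by omega)
        · exact h0
      rw [hM, if_neg hJu]
      omega
  exact key k M (by omega) (by rw [hM]; split <;> omega) T w hcard hmom

end RealRankLower

namespace RealRankUpper

lemma coeff_X_sub_C_mul (a : ℝ) (P : Polynomial ℝ) (j : ℕ) :
    ((X - C a) * P).coeff j = (if 1 ≤ j then P.coeff (j-1) else 0) - a * P.coeff j := by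
  rw [sub_mul, coeff_sub]
  congr 1
  · rcases j with _ | j
    · simp [mul_comm]
    · rw [coeff_X_mul]; simp
  · simp

lemma alt_sign {ι : Type*} [DecidableEq ι] (s : Finset ι) (c : ι → ℝ)
    (hc : ∀ i ∈ s, 0 < c i) :
    ∀ j ≤ s.card, 0 < (-1:ℝ)^(s.card - j) * (∏ i ∈ s, (X - C (c i))).coeff j := by
  classical
  induction s using Finset.induction_on with
  | empty => intro j hj; simp at hj; subst hj; simp
  | @insert a s ha ih =>
      intro j hj
      have hca : 0 < c a := hc a (Finset.mem_insert_self a s)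
      have hcs : ∀ i ∈ s, 0 < c i := fun i hi => hc i (Finset.mem_insert_of_mem hi)
      have ih' := ih hcs
      have hcard : (insert a s).card = s.card + 1 := Finset.card_insert_of_notMem ha
      rw [hcard] at hj
      rw [Finset.prod_insert ha, coeff_X_sub_C_mul, hcard]
      set P : Polynomial ℝ := ∏ i ∈ s, (X - C (c i)) with hP
      have hPdeg : P.natDegree = s.card := by
        rw [hP, natDegree_prod _ _ (fun i _ => X_sub_C_ne_zero (c i))]
        simp [natDegree_X_sub_C]
      rcases Nat.eq_zero_or_pos j with hj0 | hj1
      · subst hj0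
        rw [if_neg (by omega)]
        have h0 := ih' 0 (Nat.zero_le _)
        have : (-1:ℝ)^(s.card + 1 - 0) * (0 - c a * P.coeff 0)
            = c a * ((-1:ℝ)^(s.card - 0) * P.coeff 0) := by
          rw [show s.card + 1 - 0 = (s.card - 0) + 1 by omega, pow_succ]
          ring
        rw [this]
        exact mul_pos hca h0
      · rw [if_pos (show 1 ≤ j by omega)]
        rcases Nat.lt_or_ge j (s.card + 1) with hjc | hjc
        · -- j ≤ s.card : both terms
          have h1 := ih' (j-1) (by omega)
          have h2 := ih' j (by omega)
          have : (-1:ℝ)^(s.card + 1 - j) * (P.coeff (j-1) - c a * P.coeff j)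
              = (-1:ℝ)^(s.card - (j-1)) * P.coeff (j-1)
                + c a * ((-1:ℝ)^(s.card - j) * P.coeff j) := by
            rw [show s.card + 1 - j = (s.card - j) + 1 by omega,
              show s.card - (j-1) = (s.card - j) + 1 by omega, pow_succ]
            ring
          rw [this]
          have := mul_pos hca h2
          linarith [h1]
        · -- j = s.card + 1
          have hje : j = s.card + 1 := by omega
          subst hje
          have hPtop : P.coeff (s.card + 1) = 0 := by
            apply coeff_eq_zero_of_natDegree_lt
            omega
          have h1 := ih' s.card (le_refl _)
          rw [hPtop]
          simp only [Nat.add_sub_cancel, Nat.sub_self, pow_zero, one_mul] at h1 ⊢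
          linarith [h1]

end RealRankUpper

namespace RealRankUpper2
open RealRankUpper

lemma moments_exist (k N : ℕ) (hk : 3 ≤ k) (hN : N = 2*k-2) :
    ∃ t lam : Fin (N+1) → ℝ, ∀ m ≤ N+1,
      ∑ j, lam j * t j ^ m = (if m = k-1 then 1 else if m = k then -1 else 0) := by
  classical
  set u : Fin N → ℝ := fun i => (i : ℕ) + 1 with hu
  have hupos : ∀ i : Fin N, 0 < u i := fun i => by positivity
  set P : Polynomial ℝ := ∏ i : Fin N, (X - C (u i)) with hP
  have hcardN : (Finset.univ : Finset (Fin N)).card = N := by simp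
  have hsign := alt_sign (Finset.univ : Finset (Fin N)) u (fun i _ => hupos i)
  rw [hcardN] at hsign
  have hk2 : k ≤ N := by omega
  have hA := hsign k hk2
  have hB := hsign (k-1) (by omega)
  have hC := hsign (k-2) (by omega)
  rw [show N - (k-1) = (N-k)+1 by omega, pow_succ] at hB
  rw [show N - (k-2) = (N-k)+2 by omega, pow_add] at hC
  set ε : ℝ := (-1:ℝ)^(N-k) with he
  have hee : ε * ε = 1 := by
    rw [he, ← pow_add, ← two_mul, pow_mul]
    norm_num
  have hden : 0 < ε * (P.coeff k - P.coeff (k-1)) := by nlinarith [hA, hB]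
  have hden0 : P.coeff k - P.coeff (k-1) ≠ 0 := by
    intro h0; rw [h0, mul_zero] at hden; exact lt_irrefl _ hden
  set b : ℝ := (P.coeff (k-1) - P.coeff (k-2)) / (P.coeff k - P.coeff (k-1)) with hb
  have hnum : ε * (P.coeff (k-1) - P.coeff (k-2)) < 0 := by nlinarith [hB, hC]
  have hnd : (P.coeff (k-1) - P.coeff (k-2)) * (P.coeff k - P.coeff (k-1)) < 0 := by
    nlinarith [mul_pos_of_neg_of_neg hnum (neg_neg_iff_pos.mpr hden)]
  have hbneg : b < 0 := by
    rw [hb]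
    rcases mul_neg_iff.mp hnd with ⟨h1, h2⟩ | ⟨h1, h2⟩
    · exact div_neg_of_pos_of_neg h1 h2
    · exact div_neg_of_neg_of_pos h1 h2
  -- nodes
  set t : Fin (N+1) → ℝ := Fin.cons b u with ht
  have ht0 : t 0 = b := rfl
  have hts : ∀ i : Fin N, t i.succ = u i := fun i => by rw [ht, Fin.cons_succ]
  set W : Polynomial ℝ := ∏ j : Fin (N+1), (X - C (t j)) with hW
  have hprod : W = (X - C b) * P := by
    rw [hW, Fin.prod_univ_succ]
    congr 1
  have hWcc : W.coeff (k-1) = W.coeff k := by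
    rw [hprod, coeff_X_sub_C_mul, coeff_X_sub_C_mul,
      if_pos (show 1 ≤ k-1 by omega), if_pos (show 1 ≤ k by omega),
      show k-1-1 = k-2 by omega, show k-1 = k-1 by rfl]
    have hbmul : b * (P.coeff k - P.coeff (k-1)) = P.coeff (k-1) - P.coeff (k-2) := by
      rw [hb, div_mul_cancel₀ _ hden0]
    nlinarith [hbmul]
  -- injectivity
  have hinj : Function.Injective t := by
    intro j1 j2 h12
    induction j1 using Fin.cases with
    | zero =>
        induction j2 using Fin.cases with
        | zero => rfl
        | succ i2 =>
            exfalso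
            rw [ht0, hts i2] at h12
            have := hupos i2
            linarith [hbneg]
    | succ i1 =>
        induction j2 using Fin.cases with
        | zero =>
            exfalso
            rw [ht0, hts i1] at h12
            have := hupos i1
            linarith [hbneg]
        | succ i2 =>
            rw [hts i1, hts i2] at h12
            have : (i1 : ℕ) = (i2 : ℕ) := by
              rw [hu] at h12
              simp only at h12
              have h13 : ((i1 : ℕ) : ℝ) = ((i2 : ℕ) : ℝ) := by linarith
              exact_mod_cast h13
            exact congrArg Fin.succ (Fin.ext this)
  -- Vandermonde solve
  set A : Matrix (Fin (N+1)) (Fin (N+1)) ℝ := (Matrix.vandermonde t).transpose with hA2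
  have hdet : A.det ≠ 0 := by
    rw [hA2, Matrix.det_transpose, Matrix.det_vandermonde]
    refine Finset.prod_ne_zero_iff.mpr (fun i _ => ?_)
    refine Finset.prod_ne_zero_iff.mpr (fun j hj => ?_)
    have hij : i < j := Finset.mem_Ioi.mp hj
    exact sub_ne_zero.mpr (fun h => Fin.ne_of_gt hij (hinj h))
  set cv : Fin (N+1) → ℝ := fun m => if (m:ℕ) = k-1 then 1 else if (m:ℕ) = k then -1 else 0
    with hcv
  set lam : Fin (N+1) → ℝ := A⁻¹.mulVec cv with hlam
  have hAl : A.mulVec lam = cv := by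
    rw [hlam, Matrix.mulVec_mulVec, Matrix.mul_nonsing_inv _ (isUnit_iff_ne_zero.mpr hdet),
      Matrix.one_mulVec]
  have hmomlow : ∀ m : ℕ, m ≤ N → ∑ j, lam j * t j ^ m =
      (if m = k-1 then 1 else if m = k then -1 else 0) := by
    intro m hm
    have h1 := congrFun hAl ⟨m, by omega⟩
    have h2 : A.mulVec lam ⟨m, by omega⟩ = ∑ j, t j ^ m * lam j := by
      rw [Matrix.mulVec]
      simp only [dotProduct, hA2, Matrix.transpose_apply, Matrix.vandermonde_apply]
    rw [h2] at h1
    have h3 : cv ⟨m, by omega⟩ = (if m = k-1 then 1 else if m = k then -1 else 0) := rfl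
    rw [← h3, ← h1]
    exact Finset.sum_congr rfl (fun j _ => by ring)
  refine ⟨t, lam, fun m hm => ?_⟩
  rcases Nat.lt_or_ge m (N+1) with hmN | hmN
  · exact hmomlow m (by omega)
  · have hmtop : m = N+1 := by omega
    subst hmtop
    rw [if_neg (by omega), if_neg (by omega)]
    -- top moment vanishes
    have hWmonic : W.Monic := monic_prod_of_monic _ _ (fun j _ => monic_X_sub_C (t j))
    have hWdeg : W.natDegree = N+1 := by
      rw [hW, natDegree_prod _ _ (fun j _ => X_sub_C_ne_zero (t j))]
      simp [natDegree_X_sub_C]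
    have htop : ∀ j0 : Fin (N+1), t j0 ^ (N+1)
        = -∑ i ∈ Finset.range (N+1), W.coeff i * t j0 ^ i := by
      intro j0
      have hz : W.eval (t j0) = 0 := by
        rw [hW, eval_prod]
        exact Finset.prod_eq_zero (Finset.mem_univ j0) (by simp)
      have hs : W.eval (t j0) = ∑ i ∈ Finset.range (N+2), W.coeff i * t j0 ^ i :=
        eval_eq_sum_range' (by omega) _
      rw [Finset.sum_range_succ] at hs
      have hl : W.coeff (N+1) = 1 := by
        have := hWmonic.coeff_natDegree
        rwa [hWdeg] at this
      rw [hl, one_mul, hz] at hs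
      linarith [hs]
    calc ∑ j, lam j * t j ^ (N+1)
        = ∑ j, ∑ i ∈ Finset.range (N+1), -(W.coeff i * (lam j * t j ^ i)) := by
          refine Finset.sum_congr rfl (fun j _ => ?_)
          rw [htop j, mul_neg, Finset.mul_sum, ← Finset.sum_neg_distrib]
          exact Finset.sum_congr rfl (fun i _ => by ring)
      _ = ∑ i ∈ Finset.range (N+1), -(W.coeff i * ∑ j, lam j * t j ^ i) := by
          rw [Finset.sum_comm]
          exact Finset.sum_congr rfl (fun i _ => by
            rw [Finset.sum_neg_distrib, ← Finset.mul_sum])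
      _ = ∑ i ∈ Finset.range (N+1), -(W.coeff i *
            (if i = k-1 then 1 else if i = k then -1 else 0)) := by
          exact Finset.sum_congr rfl (fun i hi => by
            rw [hmomlow i (by exact Nat.lt_succ_iff.mp (Finset.mem_range.mp hi))])
      _ = ∑ i ∈ Finset.range (N+1),
            ((if i = k-1 then -W.coeff (k-1) else 0) + (if i = k then W.coeff k else 0)) := by
          refine Finset.sum_congr rfl (fun i _ => ?_)
          by_cases h1 : i = k-1
          · rw [h1, if_pos rfl, if_pos rfl, if_neg (show ¬ (k-1) = k by omega)]
            ring
          · by_cases h2 : i = k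
            · rw [h2, if_neg (show ¬ k = k-1 by omega), if_pos rfl,
                if_neg (show ¬ k = k-1 by omega), if_pos rfl]
              ring
            · rw [if_neg h1, if_neg h2, if_neg h1, if_neg h2]
              ring
      _ = 0 := by
          rw [Finset.sum_add_distrib, Finset.sum_ite_eq' (Finset.range (N+1)) (k-1),
            Finset.sum_ite_eq' (Finset.range (N+1)) k]
          rw [if_pos (Finset.mem_range.mpr (by omega)), if_pos (Finset.mem_range.mpr (by omega))]
          rw [hWcc]
          ring

end RealRankUpper2

namespace RealRankAssemble
open MvPolynomial

lemma assemble (k N : ℕ) (hk : 3 ≤ k) (hN : N = 2*k-2)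
    (t lam : Fin (N+1) → ℝ)
    (hm : ∀ m ≤ N+1, ∑ j, lam j * t j ^ m =
      (if m = k-1 then 1 else if m = k then -1 else 0)) :
    (MvPolynomial.C (((N+1).choose k : ℕ) : ℝ) * X 0 ^ (k-1) * X 1 ^ (k-1) * (X 0 - X 1)
        : MvPolynomial (Fin 2) ℝ)
      = ∑ j, MvPolynomial.C (lam j) *
          (MvPolynomial.C 1 * X 0 + MvPolynomial.C (t j) * X 1) ^ (N+1) := by
  have hsymm : (N+1).choose (k-1) = (N+1).choose k := by
    have h1 : N+1-k = k-1 := by omega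
    rw [← h1, Nat.choose_symm (by omega)]
  set F : Fin (N+1) → ℕ → MvPolynomial (Fin 2) ℝ :=
    fun j m => MvPolynomial.C (t j ^ m * (((N+1).choose m : ℕ) : ℝ)) *
      (X 1 ^ m * X 0 ^ (N+1-m)) with hF
  have hstep : ∀ j : Fin (N+1),
      (MvPolynomial.C 1 * X 0 + MvPolynomial.C (t j) * X 1) ^ (N+1)
        = ∑ m ∈ Finset.range (N+2), F j m := by
    intro j
    rw [MvPolynomial.C_1, one_mul, add_comm, add_pow]
    refine Finset.sum_congr rfl (fun m _ => ?_)
    simp only [hF]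
    rw [mul_pow, ← MvPolynomial.C_pow, MvPolynomial.C_mul, ← C_eq_coe_nat]
    ring
  calc (MvPolynomial.C (((N+1).choose k : ℕ) : ℝ) * X 0 ^ (k-1) * X 1 ^ (k-1) * (X 0 - X 1)
        : MvPolynomial (Fin 2) ℝ)
      = ∑ m ∈ Finset.range (N+2),
          ((if m = k-1 then MvPolynomial.C (((N+1).choose (k-1) : ℕ) : ℝ) *
              (X 1 ^ (k-1) * X 0 ^ (N+1-(k-1))) else 0)
            + (if m = k then -(MvPolynomial.C (((N+1).choose k : ℕ) : ℝ) *
              (X 1 ^ k * X 0 ^ (N+1-k))) else 0)) := by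
        rw [Finset.sum_add_distrib, Finset.sum_ite_eq' (Finset.range (N+2)) (k-1),
          Finset.sum_ite_eq' (Finset.range (N+2)) k]
        rw [if_pos (Finset.mem_range.mpr (by omega)), if_pos (Finset.mem_range.mpr (by omega))]
        rw [show N+1-(k-1) = k by omega, show N+1-k = k-1 by omega]
        have hc : ((((N+1).choose (k-1) : ℕ)) : ℝ) = (((N+1).choose k : ℕ) : ℝ) :=
          Nat.cast_inj.mpr hsymm
        rw [hc]
        have e0 : (X 0 : MvPolynomial (Fin 2) ℝ) ^ (k-1) * X 0 = X 0 ^ k := by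
          rw [← pow_succ, show k-1+1 = k by omega]
        have e1 : (X 1 : MvPolynomial (Fin 2) ℝ) ^ (k-1) * X 1 = X 1 ^ k := by
          rw [← pow_succ, show k-1+1 = k by omega]
        calc (MvPolynomial.C (((N+1).choose k : ℕ) : ℝ) * X 0 ^ (k-1) * X 1 ^ (k-1) * (X 0 - X 1)
              : MvPolynomial (Fin 2) ℝ)
            = MvPolynomial.C (((N+1).choose k : ℕ) : ℝ) * ((X 0 ^ (k-1) * X 0) * X 1 ^ (k-1))
              - MvPolynomial.C (((N+1).choose k : ℕ) : ℝ) * ((X 1 ^ (k-1) * X 1) * X 0 ^ (k-1)) := by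
              ring
          _ = MvPolynomial.C (((N+1).choose k : ℕ) : ℝ) * (X 1 ^ (k-1) * X 0 ^ k)
              + -(MvPolynomial.C (((N+1).choose k : ℕ) : ℝ) * (X 1 ^ k * X 0 ^ (k-1))) := by
              rw [e0, e1]
              ring
    _ = ∑ m ∈ Finset.range (N+2),
          MvPolynomial.C ((∑ j, lam j * t j ^ m) * (((N+1).choose m : ℕ) : ℝ)) *
            (X 1 ^ m * X 0 ^ (N+1-m)) := by
        refine (Finset.sum_congr rfl (fun m hmem => ?_)).symm
        rw [hm m (by exact Nat.lt_succ_iff.mp (Finset.mem_range.mp hmem))]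
        by_cases h1 : m = k-1
        · rw [h1, if_pos rfl, if_pos rfl, if_neg (show ¬ (k-1) = k by omega)]
          simp only [one_mul, add_zero]
        · by_cases h2 : m = k
          · rw [h2, if_neg (show ¬ k = k-1 by omega), if_neg (show ¬ k = k-1 by omega),
              if_pos rfl, if_pos rfl]
            rw [show ((-1 : ℝ) * (((N+1).choose k : ℕ) : ℝ)) = -(((N+1).choose k : ℕ) : ℝ) by ring]
            rw [map_neg]
            ring
          · rw [if_neg h1, if_neg h2, if_neg h1, if_neg h2]
            rw [show ((0 : ℝ) * (((N+1).choose m : ℕ) : ℝ)) = 0 by ring]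
            rw [map_zero]
            ring
    _ = ∑ m ∈ Finset.range (N+2), ∑ j, MvPolynomial.C (lam j) * F j m := by
        refine Finset.sum_congr rfl (fun m _ => ?_)
        have h4 : ((∑ j, lam j * t j ^ m) * (((N+1).choose m : ℕ) : ℝ))
            = ∑ j, lam j * (t j ^ m * (((N+1).choose m : ℕ) : ℝ)) := by
          rw [Finset.sum_mul]
          exact Finset.sum_congr rfl (fun j _ => by ring)
        rw [h4, map_sum, Finset.sum_mul]
        refine Finset.sum_congr rfl (fun j _ => ?_)
        simp only [hF]
        rw [MvPolynomial.C_mul]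
        ring
    _ = ∑ j, MvPolynomial.C (lam j) *
          (MvPolynomial.C 1 * X 0 + MvPolynomial.C (t j) * X 1) ^ (N+1) := by
        rw [Finset.sum_comm]
        refine Finset.sum_congr rfl (fun j _ => ?_)
        rw [← Finset.mul_sum, ← hstep j]

end RealRankAssemble

section Final
open MvPolynomial

noncomputable def LrankR (d : ℕ) (f : MvPolynomial (Fin 2) ℝ) : ℕ∞ :=
  sInf { n : ℕ∞ | ∃ r : ℕ, n = (r : ℕ∞) ∧ ∃ lam al be : Fin r → ℝ,
    f = ∑ j, MvPolynomial.C (lam j) *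
      (MvPolynomial.C (al j) * X 0 + MvPolynomial.C (be j) * X 1) ^ d }

lemma upper_exists (k : ℕ) (hk : 3 ≤ k) :
    ∃ lam al be : Fin (2*k-1) → ℝ,
      (MvPolynomial.C (((2*k-1).choose k : ℕ) : ℝ) * X 0 ^ (k-1) * X 1 ^ (k-1) * (X 0 - X 1)
          : MvPolynomial (Fin 2) ℝ)
        = ∑ j, MvPolynomial.C (lam j) *
            (MvPolynomial.C (al j) * X 0 + MvPolynomial.C (be j) * X 1) ^ (2*k-1) := by
  have hN : 2*k-1 = (2*k-2)+1 := by omega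
  rw [hN]
  obtain ⟨t, lam, hm⟩ := RealRankUpper2.moments_exist k (2*k-2) hk rfl
  exact ⟨lam, fun _ => 1, t, RealRankAssemble.assemble k (2*k-2) hk rfl t lam hm⟩

lemma lower_mv (k : ℕ) (hk : 3 ≤ k) (r : ℕ) (lam al be : Fin r → ℝ)
    (h : (MvPolynomial.C (((2*k-1).choose k : ℕ) : ℝ) * X 0 ^ (k-1) * X 1 ^ (k-1) * (X 0 - X 1)
          : MvPolynomial (Fin 2) ℝ)
        = ∑ j, MvPolynomial.C (lam j) *
            (MvPolynomial.C (al j) * X 0 + MvPolynomial.C (be j) * X 1) ^ (2*k-1)) :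
    2*k-1 ≤ r := by
  apply RealRankLower.lower k hk r lam al be
  have h2 := congrArg
    (MvPolynomial.aeval (fun i : Fin 2 => if i = 0 then (Polynomial.X : Polynomial ℝ) else 1)) h
  simp only [map_mul, map_sum, map_pow, map_sub, map_add, MvPolynomial.aeval_C,
    MvPolynomial.aeval_X, Polynomial.algebraMap_eq] at h2
  have hf : ((1 : Fin 2) = 0) = False := eq_false (by decide)
  simp only [hf, if_false, if_true] at h2
  simp only [one_pow, mul_one] at h2
  rw [Polynomial.C_1]
  exact h2

/-- For `k ≥ 3`, the form `p_{2k−1} = C(2k−1,k) x^{k−1} y^{k−1} (x − y)` has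
real rank `2k − 1`. -/
theorem realRank_p_odd (k : ℕ) (hk : 3 ≤ k) :
    LrankR (2 * k - 1)
      (MvPolynomial.C (((2 * k - 1).choose k : ℕ) : ℝ) *
        X 0 ^ (k - 1) * X 1 ^ (k - 1) * (X 0 - X 1)) = ((2 * k - 1 : ℕ) : ℕ∞) := by
  apply le_antisymm
  · apply sInf_le
    obtain ⟨lam, al, be, hid⟩ := upper_exists k hk
    exact ⟨2*k-1, rfl, lam, al, be, hid⟩
  · apply le_sInf
    rintro b ⟨r, rfl, lam, al, be, hb⟩
    have h1 : 2*k-1 ≤ r := lower_mv k hk r lam al be hb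
    exact_mod_cast Nat.cast_le.mpr h1

end Final
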